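/- Let J be the SLOPE norm with weights w_1 ≥ ... ≥ w_n ≥ 0, w_1 > 0. The subdifferential of J at x equals the set of g ∈ ℝ^n such that ⟨g, x⟩ = J(x) and Σ_{k=1}^{q} |g|_{[k]} ≤ Σ_{k=1}^{q} w_k for every q ∈ {1,...,n}. -/
import Mathlib


open Finset Matrix

/-- `kth v k` is the `(k+1)`-th largest entry of `v` (zero-indexed: `kth v 0` is the largest). -/
noncomputable def kth {n : ℕ} (v : Fin n → ℝ) (k : ℕ) : ℝ :=
  if h : k < n then v (Tuple.sort (fun i => -v i) ⟨k, h⟩) else 0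

/-- `absKth v k` is the `(k+1)`-th largest absolute entry of `v` (zero-indexed). -/
noncomputable def absKth {n : ℕ} (v : Fin n → ℝ) (k : ℕ) : ℝ :=
  kth (fun i => |v i|) k

/-- The SLOPE (sorted-ℓ1) function with weights `w 0 ≥ w 1 ≥ …` (zero-indexed). -/
noncomputable def slopeNorm {n : ℕ} (w : ℕ → ℝ) (x : Fin n → ℝ) : ℝ :=
  ∑ k ∈ Finset.range n, w k * absKth x k

/-- Dual norm of a norm `J` on `ℝ^n`. -/
noncomputable def dualNorm {n : ℕ} (J : (Fin n → ℝ) → ℝ) (g : Fin n → ℝ) : ℝ :=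
  sSup {t : ℝ | ∃ x : Fin n → ℝ, J x ≤ 1 ∧ t = ∑ i, g i * x i}

/-- `dropIdx ℓ v` is the vector `v` deprived of its `ℓ`-th entry. -/
def dropIdx {n : ℕ} (ℓ : Fin n) (v : Fin n → ℝ) : Fin (n - 1) → ℝ :=
  fun j => if h : (j : ℕ) < (ℓ : ℕ) then v ⟨j, lt_trans h ℓ.isLt⟩
           else v ⟨(j : ℕ) + 1, by have := j.isLt; omega⟩

section aux

variable {n : ℕ}

private lemma absKth_eq (v : Fin n → ℝ) (k : Fin n) :
    absKth v (k : ℕ) = |v (Tuple.sort (fun i => -|v i|) k)| := by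
  simp only [absKth, kth, k.isLt, dif_pos, Fin.eta]

private lemma absKth_nonneg (v : Fin n → ℝ) (k : ℕ) : 0 ≤ absKth v k := by
  unfold absKth kth
  split
  · exact abs_nonneg _
  · exact le_refl 0

private lemma absKth_anti (v : Fin n → ℝ) {k l : Fin n} (h : k ≤ l) :
    absKth v (l : ℕ) ≤ absKth v (k : ℕ) := by
  rw [absKth_eq, absKth_eq]
  have := Tuple.monotone_sort (fun i => -|v i|) h
  simp only [Function.comp_apply] at this
  linarith

private lemma absKth_anti' (v : Fin n → ℝ) {k l : ℕ} (hkl : k ≤ l) (hl : l < n) :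
    absKth v l ≤ absKth v k :=
  absKth_anti v (k := ⟨k, lt_of_le_of_lt hkl hl⟩) (l := ⟨l, hl⟩) hkl

private lemma absKth_eq_of_antitone (v : Fin n → ℝ) (σ : Equiv.Perm (Fin n))
    (hanti : Antitone fun k : Fin n => |v (σ k)|) (k : Fin n) :
    absKth v (k : ℕ) = |v (σ k)| := by
  rw [absKth_eq]
  have h1 : Monotone ((fun i => -|v i|) ∘ σ) := fun a b hab => neg_le_neg (hanti hab)
  have h2 : Monotone ((fun i => -|v i|) ∘ Tuple.sort (fun i => -|v i|)) :=
    Tuple.monotone_sort _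
  have h3 := congrFun (Tuple.unique_monotone h2 h1) k
  simp only [Function.comp_apply] at h3
  linarith

private lemma abs_le_absKth_zero (v : Fin n → ℝ) (i : Fin n) : |v i| ≤ absKth v 0 := by
  set σ := Tuple.sort (fun j : Fin n => -|v j|) with hσ
  have h1 : absKth v ((σ.symm i : Fin n) : ℕ) = |v i| := by
    rw [absKth_eq, hσ]
    simp
  calc |v i| = absKth v ((σ.symm i : Fin n) : ℕ) := h1.symm
    _ ≤ absKth v 0 := absKth_anti' v (Nat.zero_le _) (σ.symm i).isLt

private lemma rearrange (g y : Fin n → ℝ) :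
    ∑ i, |g i| * |y i| ≤ ∑ k ∈ Finset.range n, absKth g k * absKth y k := by
  set σ := Tuple.sort (fun i : Fin n => -|g i|) with hσ
  set τ := Tuple.sort (fun i : Fin n => -|y i|) with hτ
  have hA : Antitone fun k : Fin n => absKth g (k : ℕ) := fun a b hab => absKth_anti g hab
  have hB : Antitone fun k : Fin n => absKth y (k : ℕ) := fun a b hab => absKth_anti y hab
  have hmono : Monovary (fun k : Fin n => absKth g (k : ℕ))
      (fun k : Fin n => absKth y (k : ℕ)) := hA.monovary hB
  have key := hmono.sum_mul_comp_perm_le_sum_mul (σ := σ.trans τ.symm)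
  have hL : ∑ i, |g i| * |y i|
      = ∑ k : Fin n, absKth g (k : ℕ) * absKth y (((σ.trans τ.symm) k : Fin n) : ℕ) := by
    rw [← Equiv.sum_comp σ (fun i => |g i| * |y i|)]
    refine Finset.sum_congr rfl fun k _ => ?_
    rw [absKth_eq, absKth_eq]
    simp [hσ, hτ]
  have hR : ∑ k ∈ Finset.range n, absKth g k * absKth y k
      = ∑ k : Fin n, absKth g (k : ℕ) * absKth y (k : ℕ) :=
    (Fin.sum_univ_eq_sum_range (fun k => absKth g k * absKth y k) n).symm
  rw [hL, hR]
  exact key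

private lemma abel_le : ∀ (m : ℕ) (a c b : ℕ → ℝ),
    (∀ k l : ℕ, k ≤ l → l < m → b l ≤ b k) → (∀ k, k < m → 0 ≤ b k) →
    (∀ q, q < m → ∑ k ∈ Finset.range (q + 1), a k ≤ ∑ k ∈ Finset.range (q + 1), c k) →
    ∑ k ∈ Finset.range m, a k * b k ≤ ∑ k ∈ Finset.range m, c k * b k := by
  intro m
  induction m with
  | zero => intro a c b _ _ _; simp
  | succ m ih =>
    intro a c b hbmono hb0 hpar
    have key : ∀ d : ℕ → ℝ, ∑ k ∈ Finset.range (m + 1), d k * b k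
        = (∑ k ∈ Finset.range m, d k * (b k - b m)) + (∑ k ∈ Finset.range (m + 1), d k) * b m := by
      intro d
      have hsub : ∑ k ∈ Finset.range m, d k * (b k - b m)
          = ∑ k ∈ Finset.range m, d k * b k - ∑ k ∈ Finset.range m, d k * b m := by
        rw [← Finset.sum_sub_distrib]
        exact Finset.sum_congr rfl fun k _ => by ring
      rw [Finset.sum_range_succ, Finset.sum_range_succ (f := fun k => d k), add_mul,
        Finset.sum_mul, hsub]
      ring
    rw [key a, key c]
    have h1 : ∑ k ∈ Finset.range m, a k * (b k - b m)
        ≤ ∑ k ∈ Finset.range m, c k * (b k - b m) := by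
      refine ih a c (fun k => b k - b m) ?_ ?_ ?_
      · intro k l hkl hl
        have h := hbmono k l hkl (by omega)
        show b l - b m ≤ b k - b m
        linarith
      · intro k hk
        have h := hbmono k m (by omega) (by omega)
        show (0:ℝ) ≤ b k - b m
        linarith
      · intro q hq
        exact hpar q (by omega)
    have h2 : (∑ k ∈ Finset.range (m + 1), a k) * b m
        ≤ (∑ k ∈ Finset.range (m + 1), c k) * b m :=
      mul_le_mul_of_nonneg_right (hpar m (by omega)) (hb0 m (by omega))
    linarith

private lemma filter_range_eq {q m : ℕ} (hq : q < m) :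
    (Finset.range m).filter (fun k => k ≤ q) = Finset.range (q + 1) := by
  ext a
  simp only [Finset.mem_filter, Finset.mem_range]
  omega

end aux

theorem slope_subdifferential_eq {n : ℕ} (hn : 0 < n) (w : ℕ → ℝ)
    (hw0 : 0 < w 0) (hwa : ∀ i j : ℕ, i ≤ j → j < n → w j ≤ w i)
    (hwn : 0 ≤ w (n - 1)) (x : Fin n → ℝ) :
    {g : Fin n → ℝ | ∑ i, g i * x i = slopeNorm w x ∧ dualNorm (slopeNorm w) g ≤ 1} =
    {g : Fin n → ℝ | ∑ i, g i * x i = slopeNorm w x ∧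
      ∀ q < n, ∑ k ∈ Finset.range (q + 1), absKth g k ≤ ∑ k ∈ Finset.range (q + 1), w k} := by
  have hwk : ∀ k, k < n → 0 ≤ w k := by
    intro k hk
    exact le_trans hwn (hwa k (n - 1) (by omega) (by omega))
  ext g
  simp only [Set.mem_setOf_eq, and_congr_right_iff]
  intro _
  constructor
  · -- dual norm ≤ 1 → partial sums
    intro hdual q hq
    set S := ∑ k ∈ Finset.range (q + 1), w k with hSdef
    have hS : 0 < S := by
      rw [hSdef, Finset.sum_range_succ']
      have h0 : 0 ≤ ∑ k ∈ Finset.range q, w (k + 1) :=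
        Finset.sum_nonneg fun k hk => hwk (k + 1) (by rw [Finset.mem_range] at hk; omega)
      linarith
    have hSinv : (0:ℝ) ≤ S⁻¹ := le_of_lt (inv_pos.mpr hS)
    set σ := Tuple.sort (fun i : Fin n => -|g i|) with hσ
    set y : Fin n → ℝ := fun i =>
      (if g i < 0 then (-1 : ℝ) else 1) * (if ((σ.symm i : Fin n) : ℕ) ≤ q then S⁻¹ else 0)
      with hy
    have hite : ∀ i : Fin n, (0:ℝ) ≤ (if ((σ.symm i : Fin n) : ℕ) ≤ q then S⁻¹ else 0) := by
      intro i; split_ifs <;> simp [hSinv]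
    have habsy : ∀ i, |y i| = if ((σ.symm i : Fin n) : ℕ) ≤ q then S⁻¹ else 0 := by
      intro i
      simp only [hy]
      rw [abs_mul, abs_of_nonneg (hite i)]
      rcases lt_or_ge (g i) 0 with h | h
      · rw [if_pos h]; simp
      · rw [if_neg (not_lt.mpr h)]; simp
    have hgy : ∀ i, g i * y i = |g i| * (if ((σ.symm i : Fin n) : ℕ) ≤ q then S⁻¹ else 0) := by
      intro i
      simp only [hy]
      rcases lt_or_ge (g i) 0 with h | h
      · rw [if_pos h, abs_of_neg h]; ring
      · rw [if_neg (not_lt.mpr h), abs_of_nonneg h]; ring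
    have habsKy : ∀ k : Fin n, absKth y (k : ℕ) = if (k : ℕ) ≤ q then S⁻¹ else 0 := by
      intro k
      have hval : ∀ k : Fin n, |y (σ k)| = if (k : ℕ) ≤ q then S⁻¹ else 0 := by
        intro k; rw [habsy]; simp
      have hanti : Antitone fun k : Fin n => |y (σ k)| := by
        intro a b hab
        show |y (σ b)| ≤ |y (σ a)|
        rw [hval a, hval b]
        split_ifs with h1 h2
        · exact le_refl _
        · exact absurd (le_trans (Fin.le_iff_val_le_val.mp hab) h1) h2
        · exact hSinv
        · exact le_refl _
      rw [absKth_eq_of_antitone y σ hanti k, hval]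
    have hJy : slopeNorm w y = 1 := by
      unfold slopeNorm
      have hcong : ∀ k ∈ Finset.range n, w k * absKth y k
          = if k ≤ q then w k * S⁻¹ else 0 := by
        intro k hk
        rw [Finset.mem_range] at hk
        have := habsKy ⟨k, hk⟩
        simp only [Fin.val_mk] at this
        rw [this]
        split_ifs <;> ring
      rw [Finset.sum_congr rfl hcong, ← Finset.sum_filter, filter_range_eq hq,
        ← Finset.sum_mul, ← hSdef, mul_inv_cancel₀ hS.ne']
    have hinner : ∑ i, g i * y i = S⁻¹ * ∑ k ∈ Finset.range (q + 1), absKth g k := by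
      have e1 : ∑ i, g i * y i
          = ∑ i, |g i| * (if ((σ.symm i : Fin n) : ℕ) ≤ q then S⁻¹ else 0) :=
        Finset.sum_congr rfl fun i _ => hgy i
      have e2 : ∑ i, |g i| * (if ((σ.symm i : Fin n) : ℕ) ≤ q then S⁻¹ else 0)
          = ∑ k : Fin n, |g (σ k)| * (if (k : ℕ) ≤ q then S⁻¹ else 0) := by
        rw [← Equiv.sum_comp σ
          (fun i => |g i| * (if ((σ.symm i : Fin n) : ℕ) ≤ q then S⁻¹ else 0))]
        refine Finset.sum_congr rfl fun k _ => ?_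
        simp
      have e3 : ∑ k : Fin n, |g (σ k)| * (if (k : ℕ) ≤ q then S⁻¹ else 0)
          = ∑ k : Fin n, absKth g (k : ℕ) * (if (k : ℕ) ≤ q then S⁻¹ else 0) := by
        refine Finset.sum_congr rfl fun k _ => ?_
        rw [absKth_eq, hσ]
      have e4 : ∑ k : Fin n, absKth g (k : ℕ) * (if (k : ℕ) ≤ q then S⁻¹ else 0)
          = ∑ k ∈ Finset.range n, absKth g k * (if k ≤ q then S⁻¹ else 0) :=
        Fin.sum_univ_eq_sum_range (fun k => absKth g k * (if k ≤ q then S⁻¹ else 0)) n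
      have e5 : ∑ k ∈ Finset.range n, absKth g k * (if k ≤ q then S⁻¹ else 0)
          = ∑ k ∈ Finset.range (q + 1), absKth g k * S⁻¹ := by
        have : ∀ k ∈ Finset.range n, absKth g k * (if k ≤ q then S⁻¹ else 0)
            = if k ≤ q then absKth g k * S⁻¹ else 0 := by
          intro k _; split_ifs <;> ring
        rw [Finset.sum_congr rfl this, ← Finset.sum_filter, filter_range_eq hq]
      rw [e1, e2, e3, e4, e5, ← Finset.sum_mul]
      ring
    have hbdd : BddAbove {t : ℝ | ∃ z : Fin n → ℝ, slopeNorm w z ≤ 1 ∧ t = ∑ i, g i * z i} := by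
      refine ⟨∑ i, |g i| * (w 0)⁻¹, ?_⟩
      rintro t ⟨z, hz, rfl⟩
      have hzb : ∀ i, |z i| ≤ (w 0)⁻¹ := by
        intro i
        have h1 : |z i| ≤ absKth z 0 := abs_le_absKth_zero z i
        have h2 : w 0 * absKth z 0 ≤ slopeNorm w z := by
          unfold slopeNorm
          exact Finset.single_le_sum (f := fun k => w k * absKth z k)
            (fun k hk => mul_nonneg (hwk k (Finset.mem_range.mp hk)) (absKth_nonneg z k))
            (Finset.mem_range.mpr hn)
        have h3 : w 0 * absKth z 0 ≤ 1 := le_trans h2 hz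
        calc |z i| ≤ absKth z 0 := h1
          _ = (w 0)⁻¹ * (w 0 * absKth z 0) := by field_simp
          _ ≤ (w 0)⁻¹ * 1 := mul_le_mul_of_nonneg_left h3 (le_of_lt (inv_pos.mpr hw0))
          _ = (w 0)⁻¹ := mul_one _
      calc ∑ i, g i * z i ≤ ∑ i, |g i| * |z i| :=
            Finset.sum_le_sum fun i _ => (le_abs_self _).trans_eq (abs_mul _ _)
        _ ≤ ∑ i, |g i| * (w 0)⁻¹ :=
            Finset.sum_le_sum fun i _ => mul_le_mul_of_nonneg_left (hzb i) (abs_nonneg _)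
    have hmem : (∑ i, g i * y i)
        ∈ {t : ℝ | ∃ z : Fin n → ℝ, slopeNorm w z ≤ 1 ∧ t = ∑ i, g i * z i} :=
      ⟨y, le_of_eq hJy, rfl⟩
    have hle : ∑ i, g i * y i ≤ 1 := le_trans (le_csSup hbdd hmem) hdual
    rw [hinner] at hle
    calc ∑ k ∈ Finset.range (q + 1), absKth g k
        = S * (S⁻¹ * ∑ k ∈ Finset.range (q + 1), absKth g k) := by
          field_simp
      _ ≤ S * 1 := mul_le_mul_of_nonneg_left hle hS.le
      _ = S := mul_one S
  · -- partial sums → dual norm ≤ 1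
    intro hpar
    refine Real.sSup_le ?_ zero_le_one
    rintro t ⟨z, hz, rfl⟩
    have step1 : ∑ i, g i * z i ≤ ∑ i, |g i| * |z i| :=
      Finset.sum_le_sum fun i _ => (le_abs_self _).trans_eq (abs_mul _ _)
    have step2 := rearrange g z
    have step3 : ∑ k ∈ Finset.range n, absKth g k * absKth z k
        ≤ ∑ k ∈ Finset.range n, w k * absKth z k := by
      refine abel_le n (absKth g) w (absKth z) ?_ ?_ hpar
      · intro k l hkl hl; exact absKth_anti' z hkl hl
      · intro k _; exact absKth_nonneg z k
    calc ∑ i, g i * z i ≤ ∑ i, |g i| * |z i| := step1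
      _ ≤ ∑ k ∈ Finset.range n, absKth g k * absKth z k := step2
      _ ≤ ∑ k ∈ Finset.range n, w k * absKth z k := step3
      _ = slopeNorm w z := rfl
      _ ≤ 1 := hz
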